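/- Fix β, γ ∈ (0,∞). Let x¹, x² : [0,∞) → (0,∞) be differentiable functions satisfying, for all t ≥ 0, (x¹)′(t) = −β x¹(t)x²(t)/(x¹(t)+x²(t)) and (x²)′(t) = β x¹(t)x²(t)/(x¹(t)+x²(t)) − γ x²(t). Then for every t ≥ 0 one has x²(t)/x¹(t) = (x²(0)/x¹(0)) · e^{(β−γ)t}. -/

import Mathlib

open Set

/-- If `x¹, x² : [0,∞) → (0,∞)` are differentiable and satisfy the
SIR dynamics `(x¹)′ = −βx¹x²/(x¹+x²)`, `(x²)′ = βx¹x²/(x¹+x²) − γx²`, then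
`x²(t)/x¹(t) = (x²(0)/x¹(0))·e^{(β−γ)t}` for every `t ≥ 0`. -/
theorem stmt_11 (β γ : ℝ) (hβ : 0 < β) (hγ : 0 < γ) (x1 x2 : ℝ → ℝ)
    (hpos1 : ∀ t : ℝ, 0 ≤ t → 0 < x1 t) (hpos2 : ∀ t : ℝ, 0 ≤ t → 0 < x2 t)
    (hd1 : ∀ t : ℝ, 0 ≤ t →
      HasDerivWithinAt x1 (-(β * (x1 t * x2 t) / (x1 t + x2 t))) (Ici (0 : ℝ)) t)
    (hd2 : ∀ t : ℝ, 0 ≤ t →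
      HasDerivWithinAt x2 (β * (x1 t * x2 t) / (x1 t + x2 t) - γ * x2 t) (Ici (0 : ℝ)) t) :
    ∀ t : ℝ, 0 ≤ t → x2 t / x1 t = x2 0 / x1 0 * Real.exp ((β - γ) * t) := by
  intro t ht
  set c := β - γ with hc
  set f : ℝ → ℝ := fun s => x2 s / x1 s * Real.exp (-(c * s)) with hf
  have key : ∀ u : ℝ, 0 ≤ u → HasDerivWithinAt f 0 (Ici (0:ℝ)) u := by
    intro u hu
    have h1 := hpos1 u hu
    have h2 := hpos2 u hu
    have hx1 : x1 u ≠ 0 := ne_of_gt h1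
    have hs : x1 u + x2 u ≠ 0 := by positivity
    have hr : HasDerivWithinAt (fun s => x2 s / x1 s)
        (c * (x2 u / x1 u)) (Ici (0:ℝ)) u := by
      have h := (hd2 u hu).div (hd1 u hu) hx1
      refine h.congr_deriv ?_
      rw [hc]
      field_simp
      ring
    have he : HasDerivWithinAt (fun s => Real.exp (-(c * s)))
        (Real.exp (-(c * u)) * (-c)) (Ici (0:ℝ)) u := by
      have : HasDerivAt (fun s : ℝ => Real.exp (-(c * s)))
          (Real.exp (-(c * u)) * (-c)) u := by
        have hlin : HasDerivAt (fun s : ℝ => -(c * s)) (-c) u := by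
          exact (((hasDerivAt_id u).const_mul c).neg).congr_deriv (by simp)
        simpa using hlin.exp
      exact this.hasDerivWithinAt
    have hprod := hr.mul he
    refine hprod.congr_deriv ?_
    ring
  have hcont : ContinuousOn f (Icc 0 t) := by
    intro u hu
    exact ((key u hu.1).continuousWithinAt).mono (fun s hs => hs.1)
  have hconst : f t = f 0 := by
    have := constant_of_has_deriv_right_zero hcont
      (fun u hu => ((key u hu.1).mono (Ici_subset_Ici.mpr hu.1)))
    exact this t (right_mem_Icc.mpr ht)
  have h1 := hpos1 t ht
  have hexp : Real.exp (-(c * t)) ≠ 0 := Real.exp_ne_zero _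
  have : x2 t / x1 t * Real.exp (-(c * t)) = x2 0 / x1 0 := by
    simpa [hf] using hconst
  have := congrArg (· * Real.exp (c * t)) this
  rw [mul_assoc, ← Real.exp_add, neg_add_cancel, Real.exp_zero, mul_one] at this
  rw [this]
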